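/- arXiv:2602.09863 — 2 statements merged into one kernel-verified Lean document; each statement's English description precedes it below -/
import Mathlib

section
/- Let r > 0 be an integer and let M be an r-mountain in a tournament T. Then for all integers a, b > 0 with a + b = r + 1 and every 2-colouring φ : V(M) → {red, blue}, either the subtournament of M induced on the red vertices contains an a-mountain, or the subtournament of M induced on the blue vertices contains a b-mountain. -/
/-- A tournament on a vertex type `V`: an orientation of the complete graph. -/
structure Tournament (V : Type) where
  arc : V → V → Prop
  loopless : ∀ v, ¬ arc v v
  anti : ∀ u v, u ≠ v → (arc u v ↔ ¬ arc v u)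

namespace Tournament

variable {V W : Type}

/-- The backedge graph of `T` with respect to the total ordering of `V` induced by
an injective map `f : V → ℕ`: `u` and `v` are adjacent iff the arc between them
goes backwards in the ordering. -/
def backedge (T : Tournament V) (f : V → ℕ) : SimpleGraph V where
  Adj u v := (f u < f v ∧ T.arc v u) ∨ (f v < f u ∧ T.arc u v)
  symm := ⟨fun u v h => h.symm⟩
  loopless := by
    constructor
    intro v h
    rcases h with ⟨h, _⟩ | ⟨h, _⟩ <;> exact lt_irrefl _ h

/-- The clique number of a tournament: the minimum over all orderings of the
clique number of the corresponding backedge graph. -/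
noncomputable def cliqueNum (T : Tournament V) : ℕ :=
  sInf {n | ∃ f : V → ℕ, Function.Injective f ∧ (T.backedge f).cliqueNum = n}

/-- The subtournament induced on a set `X` of vertices. -/
def restrict (T : Tournament V) (X : Set V) : Tournament X where
  arc u v := T.arc u.1 v.1
  loopless v := T.loopless v.1
  anti u v h := T.anti u.1 v.1 (fun e => h (Subtype.ext e))

/-- `ω⃗(X)`: the clique number of the subtournament induced on `X`. -/
noncomputable def cliqueNumOn (T : Tournament V) (X : Set V) : ℕ :=
  (T.restrict X).cliqueNum

/-- Out-neighbourhood. -/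
def outN (T : Tournament V) (v : V) : Set V := {w | T.arc v w}

/-- In-neighbourhood. -/
def inN (T : Tournament V) (v : V) : Set V := {w | T.arc w v}

/-- `T.HasCopy H`: some set of vertices of `T` induces a subtournament isomorphic to `H`. -/
def HasCopy (T : Tournament V) (H : Tournament W) : Prop :=
  ∃ f : W → V, Function.Injective f ∧ ∀ u v : W, H.arc u v ↔ T.arc (f u) (f v)

end Tournament

/-- Vertex type of the tournament `D n` (`D 0` is empty, `D 1` a single vertex). -/
def DType : ℕ → Type
  | 0 => Empty
  | n+1 => (DType n) ⊕ ((DType n) ⊕ Unit)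

/-- Arcs of `D n`: `D (n+1) = Δ(X, Y, v)` with `X ⇒ Y`, `Y ⇒ v`, `v ⇒ X`,
where `X`, `Y` are copies of `D n` and `v` one extra vertex. -/
def Darc : (n : ℕ) → DType n → DType n → Prop
  | 0, x, _ => x.elim
  | n+1, Sum.inl a, Sum.inl b => Darc n a b
  | _+1, Sum.inl _, Sum.inr (Sum.inl _) => True
  | _+1, Sum.inl _, Sum.inr (Sum.inr _) => False
  | _+1, Sum.inr (Sum.inl _), Sum.inl _ => False
  | n+1, Sum.inr (Sum.inl a), Sum.inr (Sum.inl b) => Darc n a b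
  | _+1, Sum.inr (Sum.inl _), Sum.inr (Sum.inr _) => True
  | _+1, Sum.inr (Sum.inr _), Sum.inl _ => True
  | _+1, Sum.inr (Sum.inr _), Sum.inr _ => False

theorem Darc_irrefl (n : ℕ) : ∀ x : DType n, ¬ Darc n x x := by
  induction n with
  | zero => intro x; exact x.elim
  | succ n ih =>
    intro x
    match x with
    | Sum.inl a => simpa [Darc] using ih a
    | Sum.inr (Sum.inl a) => simpa [Darc] using ih a
    | Sum.inr (Sum.inr u) => simp [Darc]

theorem Darc_anti (n : ℕ) : ∀ x y : DType n, x ≠ y → (Darc n x y ↔ ¬ Darc n y x) := by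
  induction n with
  | zero => intro x; exact x.elim
  | succ n ih =>
    intro x y hxy
    match x, y with
    | Sum.inl a, Sum.inl b =>
      have hab : a ≠ b := by intro h; exact hxy (by rw [h])
      simpa [Darc] using ih a b hab
    | Sum.inl a, Sum.inr (Sum.inl b) => simp [Darc]
    | Sum.inl a, Sum.inr (Sum.inr u) => simp [Darc]
    | Sum.inr (Sum.inl a), Sum.inl b => simp [Darc]
    | Sum.inr (Sum.inl a), Sum.inr (Sum.inl b) =>
      have hab : a ≠ b := by intro h; exact hxy (by rw [h])
      simpa [Darc] using ih a b hab
    | Sum.inr (Sum.inl a), Sum.inr (Sum.inr u) => simp [Darc]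
    | Sum.inr (Sum.inr u), Sum.inl b => simp [Darc]
    | Sum.inr (Sum.inr u), Sum.inr (Sum.inl b) => simp [Darc]
    | Sum.inr (Sum.inr u), Sum.inr (Sum.inr w) =>
      exact absurd (by cases u; cases w; rfl) hxy

/-- The tournament `D n` (indexed so that `D 1` is a single vertex, and
`D (n+1)` is `Δ(D n, D n, v)`). -/
def Dtour (n : ℕ) : Tournament (DType n) where
  arc := Darc n
  loopless := Darc_irrefl n
  anti := Darc_anti n

/-- Vertex type of the tournament `A n` (`A 0` is empty, `A 1` a single vertex):
`A (n+1)` consists of `n` copies of `A n` together with `n+1` extra vertices. -/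
def AType : ℕ → Type
  | 0 => Empty
  | n+1 => (Fin n × AType n) ⊕ Fin (n+1)

/-- Arcs of `A (n+1)` (0-indexed version of the definition of Kim and Kim):
`inl (i, a)` is the vertex `a` of the copy `T_i` of `A n`, and `inr i` is the
extra vertex `v_i`.  We have `v_j ⇒ v_i` for `i < j`; `T_i ⇒ T_j` for `i < j`;
`v_i ⇒ T_j` for `i ≤ j`; and `T_j ⇒ v_i` for `j < i`. -/
def Aarc : (n : ℕ) → AType n → AType n → Prop
  | 0, x, _ => x.elim
  | n+1, Sum.inl (i, a), Sum.inl (j, b) => (i : ℕ) < (j : ℕ) ∨ (i = j ∧ Aarc n a b)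
  | _+1, Sum.inl (j, _), Sum.inr i => (j : ℕ) < (i : ℕ)
  | _+1, Sum.inr i, Sum.inl (j, _) => (i : ℕ) ≤ (j : ℕ)
  | _+1, Sum.inr i, Sum.inr j => (j : ℕ) < (i : ℕ)

theorem Aarc_irrefl (n : ℕ) : ∀ x : AType n, ¬ Aarc n x x := by
  induction n with
  | zero => intro x; exact x.elim
  | succ n ih =>
    intro x
    match x with
    | Sum.inl (i, a) =>
      simp only [Aarc, lt_irrefl, false_or, not_and]
      intro _
      exact ih a
    | Sum.inr i => simp [Aarc]

theorem Aarc_anti (n : ℕ) : ∀ x y : AType n, x ≠ y → (Aarc n x y ↔ ¬ Aarc n y x) := by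
  induction n with
  | zero => intro x; exact x.elim
  | succ n ih =>
    intro x y hxy
    match x, y with
    | Sum.inl (i, a), Sum.inl (j, b) =>
      rcases lt_trichotomy (i : ℕ) (j : ℕ) with h | h | h
      · have hne : j ≠ i := by intro e; rw [e] at h; exact lt_irrefl _ h
        simp only [Aarc]
        constructor
        · intro _ hc
          rcases hc with hc | ⟨hc, _⟩
          · omega
          · exact hne hc
        · intro _; exact Or.inl h
      · have hij : i = j := Fin.ext h
        subst hij
        have hab : a ≠ b := by
          intro e; exact hxy (by rw [e])
        simpa [Aarc] using ih a b hab
      · have hne : i ≠ j := by intro e; rw [e] at h; exact lt_irrefl _ h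
        simp only [Aarc]
        constructor
        · intro hc _
          rcases hc with hc | ⟨hc, _⟩
          · omega
          · exact hne hc
        · intro hc
          exfalso
          exact hc (Or.inl h)
    | Sum.inl (j, a), Sum.inr i => simp only [Aarc]; omega
    | Sum.inr i, Sum.inl (j, a) => simp only [Aarc]; omega
    | Sum.inr i, Sum.inr j =>
      have hne : (i : ℕ) ≠ (j : ℕ) := fun e => hxy (by rw [Fin.ext e])
      simp only [Aarc]
      omega

/-- The tournament `A n` of Kim and Kim (indexed so that `A 1` is a single vertex). -/
def Atour (n : ℕ) : Tournament (AType n) where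
  arc := Aarc n
  loopless := Aarc_irrefl n
  anti := Aarc_anti n
namespace Tournament

variable {V : Type}

/-- `M` contains a set `K` of `s` vertices such that every arc of `T[K]` is heavy,
as witnessed by a mountain (in the sense of the predicate `mtn`) inside `M`. -/
def HasHeavyClique (T : Tournament V) (mtn : Set V → Prop) (s : ℕ) (M : Set V) : Prop :=
  ∃ K ⊆ M, K.ncard = s ∧ ∀ u ∈ K, ∀ v ∈ K, T.arc u v →
    ∃ M' ⊆ M, mtn M' ∧ (∀ m ∈ M', T.arc m u) ∧ (∀ m ∈ M', T.arc v m)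

/-- `M` is minimal subject to containing an `(r,s)`-clique (heaviness being
witnessed by `r`-mountains, given by the predicate `mtn`, inside `M`). -/
def IsRSMtnAux (T : Tournament V) (mtn : Set V → Prop) (s : ℕ) (M : Set V) : Prop :=
  T.HasHeavyClique mtn s M ∧ ∀ M' ⊆ M, T.HasHeavyClique mtn s M' → M' = M

/-- `T.IsMtn r M`: the set `M` induces an `r`-mountain.  A `1`-mountain is a single
vertex, and an `(r+1)`-mountain (for `r ≥ 1`) is an `(r, r+1)`-mountain, i.e. a minimal
set containing `r+1` vertices all of whose arcs are `r`-heavy within the set. -/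
def IsMtn (T : Tournament V) : ℕ → Set V → Prop
  | 0 => fun _ => False
  | 1 => fun M => ∃ v, M = {v}
  | (r+2) => T.IsRSMtnAux (T.IsMtn (r+1)) (r+2)

/-- `T.IsRSMtn r s M`: the set `M` induces an `(r,s)`-mountain, i.e. a minimal set
containing an `(r,s)`-clique (with heaviness witnessed by `r`-mountains inside the set). -/
def IsRSMtn (T : Tournament V) (r s : ℕ) (M : Set V) : Prop :=
  T.IsRSMtnAux (T.IsMtn r) s M

/-- A `(c,a)`-ω⃗-bag-chain: pairwise disjoint bags of clique number exactly `c`,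
with all "wrong direction" neighbourhoods between bags of clique number less than `a`. -/
def IsBagChain (T : Tournament V) (c a : ℕ) {t : ℕ} (B : Fin t → Set V) : Prop :=
  (∀ i j : Fin t, i ≠ j → Disjoint (B i) (B j)) ∧
  (∀ i, T.cliqueNumOn (B i) = c) ∧
  (∀ i j : Fin t, i < j →
    (∀ v ∈ B j, T.cliqueNumOn (T.outN v ∩ B i) < a) ∧
    (∀ w ∈ B i, T.cliqueNumOn (T.inN w ∩ B j) < a))

/-- A `(c,a)`-near-bag-chain: pairwise disjoint bags of clique number at most `c`,
such that for every vertex the "wrong direction" neighbours in the union of the other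
bags have clique number at most `a`. -/
def IsNearBagChain (T : Tournament V) (c a : ℕ) {t : ℕ} (Q : Fin t → Set V) : Prop :=
  (∀ i j : Fin t, i ≠ j → Disjoint (Q i) (Q j)) ∧
  (∀ i, T.cliqueNumOn (Q i) ≤ c) ∧
  (∀ i : Fin t, ∀ v ∈ Q i,
    T.cliqueNumOn (T.inN v ∩ ⋃ j, ⋃ (_ : i < j), Q j) ≤ a ∧
    T.cliqueNumOn (T.outN v ∩ ⋃ j, ⋃ (_ : j < i), Q j) ≤ a)

end Tournament

/-- The Ramsey number `R(x,y)`: the least `N` such that every graph on `N` vertices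
contains a clique of size `x` or an independent set of size `y` (equivalently, every
red/blue colouring of the edges of `K_N` contains a red `K_x` or a blue `K_y`). -/
noncomputable def ramseyNumber (x y : ℕ) : ℕ :=
  sInf {N | ∀ G : SimpleGraph (Fin N),
    (∃ s, G.IsNClique x s) ∨ (∃ s, Gᶜ.IsNClique y s)}


open Tournament in
lemma exists_minimal_subset {V : Type} [Fintype V] (P : Set V → Prop) :
    ∀ S : Set V, P S → ∃ M₀, M₀ ⊆ S ∧ P M₀ ∧ ∀ M' ⊆ M₀, P M' → M' = M₀ := by
  classical
  have key : ∀ n (S : Set V), S.ncard ≤ n → P S →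
      ∃ M₀, M₀ ⊆ S ∧ P M₀ ∧ ∀ M' ⊆ M₀, P M' → M' = M₀ := by
    intro n
    induction n with
    | zero =>
      intro S hc hS
      have hS0 : S = ∅ := by
        have h0 : S.ncard = 0 := Nat.le_antisymm hc (Nat.zero_le _)
        exact (Set.ncard_eq_zero (Set.toFinite S)).mp h0
      refine ⟨S, subset_rfl, hS, ?_⟩
      intro M' hsub _
      subst hS0
      exact Set.subset_eq_empty hsub rfl
    | succ n ihn =>
      intro S hc hS
      by_cases h : ∀ M' ⊆ S, P M' → M' = S
      · exact ⟨S, subset_rfl, hS, h⟩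
      · push_neg at h
        obtain ⟨M', hsub, hPM', hne⟩ := h
        have hss : M' ⊂ S := ssubset_of_subset_of_ne hsub hne
        have hcard : M'.ncard ≤ n := by
          have := Set.ncard_lt_ncard hss (Set.toFinite S)
          omega
        obtain ⟨M₀, h1, h2, h3⟩ := ihn M' hcard hPM'
        exact ⟨M₀, h1.trans hsub, h2, h3⟩
  intro S hS
  exact key S.ncard S le_rfl hS

open Tournament in
lemma mtn_colour_step {V : Type} [Fintype V] (T : Tournament V) (n : ℕ)
    (ih : ∀ M : Set V, T.IsMtn (n+1) M → ∀ a b : ℕ, 0 < a → 0 < b → a + b = n + 2 →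
      ∀ φ : V → Bool, (∃ M' ⊆ {v ∈ M | φ v = true}, T.IsMtn a M') ∨
        (∃ M' ⊆ {v ∈ M | φ v = false}, T.IsMtn b M'))
    (M K : Set V) (hKM : K ⊆ M)
    (hK : ∀ u ∈ K, ∀ v ∈ K, T.arc u v →
      ∃ M' ⊆ M, T.IsMtn (n+1) M' ∧ (∀ m ∈ M', T.arc m u) ∧ (∀ m ∈ M', T.arc v m))
    (a b : ℕ) (ha : 0 < a) (hb : 0 < b) (hab : a + b = n + 3)
    (φ : V → Bool)
    (hcount : a ≤ (K ∩ {v | φ v = true}).ncard) :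
    (∃ M' ⊆ {v ∈ M | φ v = true}, T.IsMtn a M') ∨
      (∃ M' ⊆ {v ∈ M | φ v = false}, T.IsMtn b M') := by
  classical
  rcases Nat.lt_or_ge a 2 with h1 | h2
  · -- a = 1 : a single red vertex suffices
    have ha1 : a = 1 := by omega
    subst ha1
    obtain ⟨K1, hK1sub, hK1⟩ := Set.exists_subset_card_eq hcount
    obtain ⟨v, rfl⟩ := Set.ncard_eq_one.mp hK1
    obtain ⟨hvK, hvred⟩ := hK1sub rfl
    left
    refine ⟨{v}, ?_, ⟨v, rfl⟩⟩
    intro x hx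
    rcases hx with rfl
    exact ⟨hKM hvK, hvred⟩
  · by_cases hblue : ∃ M' ⊆ {v ∈ M | φ v = false}, T.IsMtn b M'
    · exact Or.inr hblue
    left
    obtain ⟨K', hK'sub, hK'card⟩ := Set.exists_subset_card_eq hcount
    have hHC : T.HasHeavyClique (T.IsMtn (a-1)) a {v ∈ M | φ v = true} := by
      refine ⟨K', ?_, hK'card, ?_⟩
      · intro x hx
        exact ⟨hKM (hK'sub hx).1, (hK'sub hx).2⟩
      · intro u hu v hv harc
        obtain ⟨M', hM'M, hM'mtn, hMu, hvM⟩ :=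
          hK u (hK'sub hu).1 v (hK'sub hv).1 harc
        rcases ih M' hM'mtn (a-1) b (by omega) hb (by omega) φ with
          ⟨N, hNsub, hNmtn⟩ | ⟨N, hNsub, hNmtn⟩
        · refine ⟨N, ?_, hNmtn, fun m hm => hMu m (hNsub hm).1,
            fun m hm => hvM m (hNsub hm).1⟩
          intro x hx
          exact ⟨hM'M (hNsub hx).1, (hNsub hx).2⟩
        · exfalso
          apply hblue
          refine ⟨N, ?_, hNmtn⟩
          intro x hx
          exact ⟨hM'M (hNsub hx).1, (hNsub hx).2⟩
    obtain ⟨M₀, hM₀R, hM₀P, hmin⟩ :=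
      exists_minimal_subset (T.HasHeavyClique (T.IsMtn (a-1)) a) _ hHC
    refine ⟨M₀, hM₀R, ?_⟩
    obtain ⟨k, rfl⟩ : ∃ k, a = k + 2 := ⟨a - 2, by omega⟩
    exact ⟨hM₀P, hmin⟩

open Tournament in
lemma mtn_two_colour {V : Type} [Fintype V] (T : Tournament V) :
    ∀ r : ℕ, 0 < r → ∀ M : Set V, T.IsMtn r M → ∀ a b : ℕ, 0 < a → 0 < b →
      a + b = r + 1 → ∀ φ : V → Bool,
      (∃ M' ⊆ {v ∈ M | φ v = true}, T.IsMtn a M') ∨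
        (∃ M' ⊆ {v ∈ M | φ v = false}, T.IsMtn b M') := by
  classical
  intro r
  induction r using Nat.strong_induction_on with
  | _ r ih =>
  intro hr M hM a b ha hb hab φ
  match r, hr, hM, hab with
  | 1, _, hM, hab =>
    obtain ⟨v, rfl⟩ := hM
    have hab' : a = 1 ∧ b = 1 := by omega
    obtain ⟨rfl, rfl⟩ := hab'
    cases hφ : φ v with
    | true =>
      left
      refine ⟨{v}, ?_, ⟨v, rfl⟩⟩
      intro x hx; rcases hx with rfl; exact ⟨rfl, hφ⟩
    | false =>
      right
      refine ⟨{v}, ?_, ⟨v, rfl⟩⟩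
      intro x hx; rcases hx with rfl; exact ⟨rfl, hφ⟩
  | (n+2), _, hM, hab =>
    obtain ⟨⟨K, hKM, hKcard, hK⟩, -⟩ := hM
    have ihn : ∀ M : Set V, T.IsMtn (n+1) M → ∀ a b : ℕ, 0 < a → 0 < b →
        a + b = n + 2 → ∀ φ : V → Bool,
        (∃ M' ⊆ {v ∈ M | φ v = true}, T.IsMtn a M') ∨
          (∃ M' ⊆ {v ∈ M | φ v = false}, T.IsMtn b M') := by
      intro M hM
      exact ih (n+1) (by omega) (by omega) M hM
    have hsplit : (K ∩ {v | φ v = true}).ncard + (K ∩ {v | φ v = false}).ncard = n + 2 := by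
      have h1 := Set.ncard_inter_add_ncard_diff_eq_ncard K {v | φ v = true} (Set.toFinite K)
      have h2 : K \ {v | φ v = true} = K ∩ {v | φ v = false} := by
        ext x
        simp [Bool.not_eq_true]
      rw [h2] at h1
      omega
    rcases le_or_gt a (K ∩ {v | φ v = true}).ncard with hcase | hcase
    · exact mtn_colour_step T n ihn M K hKM hK a b ha hb (by omega) φ hcase
    · have hcase' : b ≤ (K ∩ {v | (!φ v) = true}).ncard := by
        have he : {v | (!φ v) = true} = {v | φ v = false} := by
          ext x; simp
        rw [he]
        omega
      have hres := mtn_colour_step T n ihn M K hKM hK b a hb ha (by omega)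
        (fun v => !φ v) hcase'
      have e1 : {v ∈ M | (!φ v) = true} = {v ∈ M | φ v = false} := by
        ext x; simp
      have e2 : {v ∈ M | (!φ v) = false} = {v ∈ M | φ v = true} := by
        ext x; simp
      rw [e1, e2] at hres
      exact hres.symm

open Tournament in
/-- Lemma (2-colouring mountains): if `M` is an `r`-mountain in a tournament `T`,
`a + b = r + 1` with `a, b > 0`, and `φ` is a 2-colouring of the vertices of `M`,
then the red vertices of `M` contain an `a`-mountain or the blue vertices of `M`
contain a `b`-mountain. -/
theorem stmt_7 {V : Type} [Fintype V] (T : Tournament V) (r : ℕ) (hr : 0 < r)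
    (M : Set V) (hM : T.IsMtn r M) (a b : ℕ) (ha : 0 < a) (hb : 0 < b)
    (hab : a + b = r + 1) (φ : V → Bool) :
    (∃ M' ⊆ {v ∈ M | φ v = true}, T.IsMtn a M') ∨
      (∃ M' ⊆ {v ∈ M | φ v = false}, T.IsMtn b M') := by
  exact mtn_two_colour T r hr M hM a b ha hb hab φ
end

section
/- Let n ≥ 2 and let c_small ≥ 0 and c_large ≥ 2^n · c_small be integers. Let T be a tournament that is D_n-free and such that every subtournament T' of T with ω⃗(T') ≥ c_small contains a copy of D_{n−1}, and let (B_1, …, B_t) be a (c_large, c_small)-ω⃗-bag-chain in T. Then for every i ∈ {1, …, t} and every v ∈ B_i: (a) ω⃗(N^−(v) ∩ ⋃_{k>i} B_k) < 2·c_small, and (b) ω⃗(N^+(v) ∩ ⋃_{k<i} B_k) < 2·c_small. -/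
section Infra

namespace Tournament

variable {V : Type}

theorem arc_ne' (T : Tournament V) {u v : V} (h : T.arc u v) : u ≠ v := by
  rintro rfl; exact T.loopless u h

theorem arc_asymm' (T : Tournament V) {u v : V} (h : T.arc u v) : ¬ T.arc v u :=
  (T.anti u v (T.arc_ne' h)).mp h

theorem arc_of_not_arc' (T : Tournament V) {u v : V} (hne : u ≠ v) (h : ¬ T.arc v u) :
    T.arc u v :=
  (T.anti u v hne).mpr h

theorem arc_total' (T : Tournament V) {u v : V} (hne : u ≠ v) : T.arc u v ∨ T.arc v u := by
  by_cases h : T.arc v u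
  · exact Or.inr h
  · exact Or.inl (T.arc_of_not_arc' hne h)

lemma cliqueNum_le_backedge (T : Tournament V) {f : V → ℕ} (hf : Function.Injective f) :
    T.cliqueNum ≤ (T.backedge f).cliqueNum :=
  Nat.sInf_le ⟨f, hf, rfl⟩

lemma exists_backedge (T : Tournament V) [Finite V] :
    ∃ f : V → ℕ, Function.Injective f ∧ (T.backedge f).cliqueNum = T.cliqueNum := by
  obtain ⟨e⟩ := nonempty_embedding_nat V
  have hne : {n | ∃ f : V → ℕ, Function.Injective f ∧ (T.backedge f).cliqueNum = n}.Nonempty :=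
    ⟨(T.backedge e).cliqueNum, e, e.injective, rfl⟩
  exact Nat.sInf_mem hne

lemma cliqueNum_le_of_forall {α : Type} [Fintype α] (G : SimpleGraph α) (m : ℕ)
    (h : ∀ n (s : Finset α), G.IsNClique n s → n ≤ m) : G.cliqueNum ≤ m := by
  obtain ⟨s, hs⟩ := G.exists_isNClique_cliqueNum
  exact h _ s hs

lemma card_le_cliqueNum_of {α β : Type} [Fintype β] (H : SimpleGraph β) (s : Finset α)
    (g : ∀ u : α, u ∈ s → β)
    (hg : ∀ x hx y hy, g x hx = g y hy → x = y)
    (hadj : ∀ x hx y hy, x ≠ y → H.Adj (g x hx) (g y hy)) : s.card ≤ H.cliqueNum := by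
  classical
  set t : Finset β := s.attach.image (fun u => g u.1 u.2) with ht
  have hc : H.IsClique ↑t := by
    rintro x hx y hy hxy
    rw [ht, Finset.coe_image] at hx hy
    obtain ⟨⟨x', hx'⟩, -, rfl⟩ := hx
    obtain ⟨⟨y', hy'⟩, -, rfl⟩ := hy
    refine hadj x' hx' y' hy' ?_
    rintro rfl; exact hxy rfl
  have hcard : t.card = s.card := by
    rw [ht, Finset.card_image_of_injOn, Finset.card_attach]
    rintro ⟨x, hx⟩ - ⟨y, hy⟩ - hxy
    exact Subtype.ext (hg x hx y hy hxy)
  calc s.card = t.card := hcard.symm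
    _ ≤ H.cliqueNum := SimpleGraph.IsClique.card_le_cliqueNum (tc := hc)

lemma cliqueNumOn_mono [Finite V] (T : Tournament V) {A B : Set V} (hAB : A ⊆ B) :
    T.cliqueNumOn A ≤ T.cliqueNumOn B := by
  classical
  haveI : Fintype ↥A := Fintype.ofFinite _
  haveI : Fintype ↥B := Fintype.ofFinite _
  obtain ⟨f, hf, hval⟩ := (T.restrict B).exists_backedge
  have hginj : Function.Injective (fun u : ↥A => f (Set.inclusion hAB u)) :=
    hf.comp (Set.inclusion_injective hAB)
  refine le_trans (cliqueNum_le_backedge _ hginj) ?_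
  rw [show T.cliqueNumOn B = ((T.restrict B).backedge f).cliqueNum from hval.symm]
  refine cliqueNum_le_of_forall _ _ (fun n s hs => ?_)
  rw [← hs.2]
  refine card_le_cliqueNum_of _ s (fun u _ => Set.inclusion hAB u)
    (fun x _ y _ h => Set.inclusion_injective hAB h) (fun x hx y hy hne => ?_)
  exact hs.1 (Finset.mem_coe.mpr hx) (Finset.mem_coe.mpr hy) hne

lemma cliqueNumOn_union_le [Finite V] (T : Tournament V) (A B : Set V) :
    T.cliqueNumOn (A ∪ B) ≤ T.cliqueNumOn A + T.cliqueNumOn B := by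
  classical
  haveI : Fintype ↥A := Fintype.ofFinite _
  haveI : Fintype ↥B := Fintype.ofFinite _
  obtain ⟨f, hf, hfval⟩ := (T.restrict A).exists_backedge
  obtain ⟨g, hg, hgval⟩ := (T.restrict B).exists_backedge
  obtain ⟨M, hM⟩ := Finite.exists_le f
  have memB : ∀ u : ↥(A ∪ B), u.1 ∉ A → u.1 ∈ B := fun u hu => u.2.resolve_left hu
  set F : ↥(A ∪ B) → ℕ := fun u =>
    if h : u.1 ∈ A then f ⟨u.1, h⟩ else M + 1 + g ⟨u.1, memB u h⟩ with hF
  have hFpos : ∀ (u : ↥(A ∪ B)) (hu : u.1 ∈ A), F u = f ⟨u.1, hu⟩ := by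
    intro u hu; simp only [hF]; rw [dif_pos hu]
  have hFneg : ∀ (u : ↥(A ∪ B)) (hu : u.1 ∉ A), F u = M + 1 + g ⟨u.1, memB u hu⟩ := by
    intro u hu; simp only [hF]; rw [dif_neg hu]
  have hFinj : Function.Injective F := by
    rintro u w huw
    by_cases hu : u.1 ∈ A <;> by_cases hw : w.1 ∈ A
    · rw [hFpos u hu, hFpos w hw] at huw
      exact Subtype.ext (show u.1 = w.1 from congrArg (Subtype.val : ↥A → V) (hf huw))
    · rw [hFpos u hu, hFneg w hw] at huw
      have := hM ⟨u.1, hu⟩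
      exfalso; omega
    · rw [hFneg u hu, hFpos w hw] at huw
      have := hM ⟨w.1, hw⟩
      exfalso; omega
    · rw [hFneg u hu, hFneg w hw] at huw
      have hgu : g ⟨u.1, memB u hu⟩ = g ⟨w.1, memB w hw⟩ := by omega
      exact Subtype.ext (show u.1 = w.1 from congrArg (Subtype.val : ↥B → V) (hg hgu))
  refine le_trans (cliqueNum_le_backedge _ hFinj) ?_
  refine cliqueNum_le_of_forall _ _ (fun n s hs => ?_)
  set s1 := s.filter (fun u => u.1 ∈ A) with hs1
  set s2 := s.filter (fun u => ¬ u.1 ∈ A) with hs2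
  have hcards : s1.card + s2.card = n := by
    rw [hs1, hs2, Finset.card_filter_add_card_filter_not, hs.2]
  have h1 : s1.card ≤ T.cliqueNumOn A := by
    rw [show T.cliqueNumOn A = ((T.restrict A).backedge f).cliqueNum from hfval.symm]
    refine card_le_cliqueNum_of _ s1
      (fun u hu => (⟨u.1, (Finset.mem_filter.mp hu).2⟩ : ↥A))
      (fun x hx y hy h => Subtype.ext (show x.1 = y.1 from congrArg (Subtype.val : ↥A → V) h))
      (fun x hx y hy hne => ?_)
    have hxA : x.1 ∈ A := (Finset.mem_filter.mp hx).2
    have hyA : y.1 ∈ A := (Finset.mem_filter.mp hy).2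
    have hadj := hs.1 (Finset.mem_coe.mpr (Finset.mem_filter.mp hx).1)
      (Finset.mem_coe.mpr (Finset.mem_filter.mp hy).1) hne
    rcases hadj with ⟨hlt, harc⟩ | ⟨hlt, harc⟩
    · rw [hFpos x hxA, hFpos y hyA] at hlt
      exact Or.inl ⟨hlt, harc⟩
    · rw [hFpos x hxA, hFpos y hyA] at hlt
      exact Or.inr ⟨hlt, harc⟩
  have h2 : s2.card ≤ T.cliqueNumOn B := by
    rw [show T.cliqueNumOn B = ((T.restrict B).backedge g).cliqueNum from hgval.symm]
    refine card_le_cliqueNum_of _ s2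
      (fun u hu => (⟨u.1, memB u (Finset.mem_filter.mp hu).2⟩ : ↥B))
      (fun x hx y hy h => Subtype.ext (show x.1 = y.1 from congrArg (Subtype.val : ↥B → V) h))
      (fun x hx y hy hne => ?_)
    have hxA : x.1 ∉ A := (Finset.mem_filter.mp hx).2
    have hyA : y.1 ∉ A := (Finset.mem_filter.mp hy).2
    have hadj := hs.1 (Finset.mem_coe.mpr (Finset.mem_filter.mp hx).1)
      (Finset.mem_coe.mpr (Finset.mem_filter.mp hy).1) hne
    show ((T.restrict B).backedge g).Adj ⟨x.1, memB x hxA⟩ ⟨y.1, memB y hyA⟩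
    rcases hadj with ⟨hlt, harc⟩ | ⟨hlt, harc⟩
    · rw [hFneg x hxA, hFneg y hyA] at hlt
      exact Or.inl ⟨by omega, harc⟩
    · rw [hFneg x hxA, hFneg y hyA] at hlt
      exact Or.inr ⟨by omega, harc⟩
  omega

lemma cliqueNumOn_empty_le (T : Tournament V) : T.cliqueNumOn (∅ : Set V) ≤ 0 := by
  classical
  haveI : Fintype ↥(∅ : Set V) := Fintype.ofIsEmpty
  have hinj : Function.Injective (fun _ : ↥(∅ : Set V) => (0 : ℕ)) := by
    rintro ⟨u, hu⟩; exact absurd hu (Set.notMem_empty u)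
  refine le_trans (cliqueNum_le_backedge _ hinj) ?_
  refine cliqueNum_le_of_forall _ _ (fun n s hs => ?_)
  rw [← hs.2]
  have : s = ∅ := Finset.eq_empty_of_forall_notMem
    (fun x _ => absurd x.2 (Set.notMem_empty x.1))
  simp [this]

lemma cliqueNumOn_biUnion_le [Finite V] (T : Tournament V) {α : Type} [DecidableEq α]
    (s : Finset α) (g : α → Set V) :
    T.cliqueNumOn (⋃ a ∈ s, g a) ≤ ∑ a ∈ s, T.cliqueNumOn (g a) := by
  classical
  induction s using Finset.induction_on with
  | empty => simpa using T.cliqueNumOn_empty_le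
  | @insert a s ha ih =>
    rw [Finset.set_biUnion_insert, Finset.sum_insert ha]
    exact le_trans (T.cliqueNumOn_union_le _ _) (Nat.add_le_add le_rfl ih)

end Tournament

end Infra

section Infra2

instance DType.fintype : (n : ℕ) → Fintype (DType n)
  | 0 => inferInstanceAs (Fintype Empty)
  | n+1 => letI := DType.fintype n; inferInstanceAs (Fintype (DType n ⊕ (DType n ⊕ Unit)))

lemma card_DType : ∀ n, Fintype.card (DType n) = 2 ^ n - 1
  | 0 => by
    simp [DType, DType.fintype]
    exact Fintype.card_eq_zero
  | n+1 => by
    have ih := card_DType n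
    have h2 : 1 ≤ 2 ^ n := Nat.one_le_two_pow
    have hpow : 2 ^ (n+1) = 2 * 2 ^ n := by ring
    show Fintype.card (DType n ⊕ (DType n ⊕ Unit)) = 2 ^ (n+1) - 1
    rw [Fintype.card_sum, Fintype.card_sum, ih]
    simp only [Fintype.card_unit]
    omega

namespace Tournament

variable {V : Type}

lemma exists_copy_fun (T : Tournament V) {X : Set V} {m : ℕ}
    (h : (T.restrict X).HasCopy (Dtour m)) :
    ∃ F : DType m → V, Function.Injective F ∧ (∀ b, F b ∈ X) ∧
      ∀ u w, Darc m u w ↔ T.arc (F u) (F w) := by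
  obtain ⟨f, hfinj, hfarc⟩ := h
  exact ⟨fun b => (f b).1, fun a b hab => hfinj (Subtype.ext hab),
    fun b => (f b).2, fun u w => hfarc u w⟩

/-- Build a copy of `D (m+2)` from two copies of `D (m+1)` and an apex vertex. -/
lemma build_copy (T : Tournament V) {m : ℕ} (FX FY : DType (m+1) → V) (v : V)
    (hFXinj : Function.Injective FX) (hFYinj : Function.Injective FY)
    (hFXarc : ∀ u w, Darc (m+1) u w ↔ T.arc (FX u) (FX w))
    (hFYarc : ∀ u w, Darc (m+1) u w ↔ T.arc (FY u) (FY w))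
    (hXY : ∀ a b, T.arc (FX a) (FY b))
    (hYv : ∀ b, T.arc (FY b) v)
    (hvX : ∀ a, T.arc v (FX a)) :
    T.HasCopy (Dtour (m+2)) := by
  have hXne : ∀ a b, FX a ≠ FY b := fun a b => T.arc_ne' (hXY a b)
  have hXv : ∀ a, FX a ≠ v := fun a => fun h => T.loopless v (h ▸ hvX a)
  have hYne : ∀ b, FY b ≠ v := fun b => T.arc_ne' (hYv b)
  refine ⟨fun x => match x with
    | Sum.inl a => FX a
    | Sum.inr (Sum.inl b) => FY b
    | Sum.inr (Sum.inr _) => v, ?_, ?_⟩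
  · rintro (a | b | u) (a' | b' | u') h
    · exact congrArg Sum.inl (hFXinj h)
    · exact absurd h (hXne a b')
    · exact absurd h (hXv a)
    · exact absurd h.symm (hXne a' b)
    · exact congrArg (fun z => Sum.inr (Sum.inl z)) (hFYinj h)
    · exact absurd h (hYne b)
    · exact absurd h.symm (hXv a')
    · exact absurd h.symm (hYne b')
    · rfl
  · rintro (a | b | u) (a' | b' | u')
    · simpa [Dtour, Darc] using hFXarc a a'
    · simpa [Dtour, Darc] using hXY a b'
    · simpa [Dtour, Darc] using T.arc_asymm' (hvX a)
    · simpa [Dtour, Darc] using T.arc_asymm' (hXY a' b)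
    · simpa [Dtour, Darc] using hFYarc b b'
    · simpa [Dtour, Darc] using hYv b
    · simpa [Dtour, Darc] using hvX a'
    · simpa [Dtour, Darc] using T.arc_asymm' (hYv b')
    · simpa [Dtour, Darc] using T.loopless v

end Tournament

end Infra2

open Tournament in
/-- Lemma (bag-to-bag arcs): in a `(c_large, c_small)`-ω⃗-bag-chain of a `D n`-free
tournament, for each `v ∈ B i`, the in-neighbours of `v` in later bags and the
out-neighbours of `v` in earlier bags have clique number less than `2·c_small`. -/
theorem stmt_16 {V : Type} [Fintype V] (n : ℕ) (hn : 2 ≤ n)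
    (csmall clarge : ℕ) (hcl : 2 ^ n * csmall ≤ clarge)
    (T : Tournament V)
    (hDfree : ¬ T.HasCopy (Dtour n))
    (hsub : ∀ X : Set V, csmall ≤ T.cliqueNumOn X → (T.restrict X).HasCopy (Dtour (n - 1)))
    {t : ℕ} (B : Fin t → Set V) (hB : T.IsBagChain clarge csmall B)
    (i : Fin t) (v : V) (hv : v ∈ B i) :
    T.cliqueNumOn (T.inN v ∩ ⋃ k, ⋃ (_ : i < k), B k) < 2 * csmall ∧
    T.cliqueNumOn (T.outN v ∩ ⋃ k, ⋃ (_ : k < i), B k) < 2 * csmall := by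
  classical
  obtain ⟨m, rfl⟩ : ∃ m, n = m + 2 := ⟨n - 2, by omega⟩
  have hsub' : ∀ X : Set V, csmall ≤ T.cliqueNumOn X →
      (T.restrict X).HasCopy (Dtour (m + 1)) := fun X hX => hsub X hX
  rcases Nat.eq_zero_or_pos csmall with hc0 | hc
  · exfalso
    obtain ⟨F, hFinj, hFmem, hFarc⟩ := T.exists_copy_fun (hsub' ∅ (by omega))
    exact Set.notMem_empty _ (hFmem (Sum.inr (Sum.inr ())))
  obtain ⟨c1, rfl⟩ : ∃ c1, csmall = c1 + 1 := ⟨csmall - 1, by omega⟩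
  have hp2 : 2 ≤ 2 ^ (m + 1) := by
    calc 2 = 2 ^ 1 := by norm_num
    _ ≤ 2 ^ (m + 1) := Nat.pow_le_pow_right (by norm_num) (by omega)
  obtain ⟨p1, hp1⟩ : ∃ p1, 2 ^ (m + 1) = p1 + 2 := ⟨2 ^ (m + 1) - 2, by omega⟩
  have hcl2 : 2 * ((p1 + 2) * (c1 + 1)) ≤ clarge := by
    have : 2 ^ (m + 2) * (c1 + 1) = 2 * ((p1 + 2) * (c1 + 1)) := by
      rw [← hp1]; ring
    omega
  have hBdisj := hB.1
  have hBclique := hB.2.1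
  have hBchain := hB.2.2
  constructor
  -- Part (a)
  · by_contra hcon
    push_neg at hcon
    set S : Set V := T.inN v ∩ ⋃ k, ⋃ (_ : i < k), B k with hSdef
    have hSne : S.Nonempty := by
      rcases Set.eq_empty_or_nonempty S with h | h
      · rw [h] at hcon
        have := T.cliqueNumOn_empty_le
        omega
      · exact h
    have hKfin : ({k : Fin t | i < k ∧ (S ∩ B k).Nonempty}).Finite := Set.toFinite _
    have hKne : ({k : Fin t | i < k ∧ (S ∩ B k).Nonempty}).Nonempty := by
      obtain ⟨u, huS⟩ := hSne
      obtain ⟨j, hij, huj⟩ : ∃ j, i < j ∧ u ∈ B j := by simpa using huS.2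
      exact ⟨j, hij, u, huS, huj⟩
    obtain ⟨k, ⟨hik, -⟩, hkmin⟩ := Set.exists_min_image _ id hKfin hKne
    set H : Set V := S ∩ ⋃ j, ⋃ (_ : k < j), B j with hHdef
    have hsplit : S ⊆ (S ∩ B k) ∪ H := by
      intro u hu
      obtain ⟨j, hij, huj⟩ : ∃ j, i < j ∧ u ∈ B j := by simpa using hu.2
      rcases eq_or_ne j k with rfl | hne
      · exact Or.inl ⟨hu, huj⟩
      · have hkj : k < j := lt_of_le_of_ne (hkmin j ⟨hij, u, hu, huj⟩) hne.symm
        exact Or.inr ⟨hu, Set.mem_iUnion₂.mpr ⟨j, hkj, huj⟩⟩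
    have hSBk : T.cliqueNumOn (S ∩ B k) < c1 + 1 :=
      lt_of_le_of_lt
        (T.cliqueNumOn_mono (show S ∩ B k ⊆ T.inN v ∩ B k from fun u hu => ⟨hu.1.1, hu.2⟩))
        ((hBchain i k hik).2 v hv)
    have hHge : c1 + 1 ≤ T.cliqueNumOn H := by
      have h1 := T.cliqueNumOn_mono hsplit
      have h2 := T.cliqueNumOn_union_le (S ∩ B k) H
      omega
    obtain ⟨FY, hFYinj, hFYmem, hFYarc⟩ := T.exists_copy_fun (hsub' H hHge)
    have hYS : ∀ b, FY b ∈ S := fun b => (hFYmem b).1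
    have hYbag : ∀ b, ∃ j, k < j ∧ FY b ∈ B j := fun b => by
      have := (hFYmem b).2; simpa using this
    set U : Set V := ⋃ b ∈ (Finset.univ : Finset (DType (m + 1))), (T.outN (FY b) ∩ B k)
      with hUdef
    have hUle : T.cliqueNumOn U ≤ (p1 + 1) * c1 := by
      refine le_trans (T.cliqueNumOn_biUnion_le _ _) ?_
      have hterm : ∀ b ∈ (Finset.univ : Finset (DType (m + 1))),
          T.cliqueNumOn (T.outN (FY b) ∩ B k) ≤ c1 := by
        intro b _
        obtain ⟨j, hkj, hbj⟩ := hYbag b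
        have := (hBchain k j hkj).1 (FY b) hbj
        omega
      refine le_trans (Finset.sum_le_sum hterm) ?_
      rw [Finset.sum_const, Finset.card_univ, card_DType, smul_eq_mul, hp1]
      have h21 : p1 + 2 - 1 = p1 + 1 := rfl
      rw [h21]
    set P : Set V := T.outN v ∩ B k with hPdef
    have hvnotk : v ∉ B k := fun h =>
      Set.disjoint_left.mp (hBdisj i k (ne_of_lt hik)) hv h
    have hPcov : B k ⊆ P ∪ (T.inN v ∩ B k) := by
      intro u hu
      have hne : u ≠ v := fun h => hvnotk (h ▸ hu)
      rcases T.arc_total' hne with h | h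
      · exact Or.inr ⟨h, hu⟩
      · exact Or.inl ⟨h, hu⟩
    have hPge : clarge ≤ T.cliqueNumOn P + T.cliqueNumOn (T.inN v ∩ B k) := by
      have h1 := T.cliqueNumOn_mono hPcov
      have h2 := T.cliqueNumOn_union_le P (T.inN v ∩ B k)
      have h3 := hBclique k
      omega
    have hinNk : T.cliqueNumOn (T.inN v ∩ B k) < c1 + 1 := (hBchain i k hik).2 v hv
    set Wset : Set V := P \ U with hWdef
    have hPW : T.cliqueNumOn P ≤ T.cliqueNumOn Wset + T.cliqueNumOn U := by
      have h1 : P ⊆ Wset ∪ U := fun u hu => by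
        by_cases h : u ∈ U
        · exact Or.inr h
        · exact Or.inl ⟨hu, h⟩
      exact le_trans (T.cliqueNumOn_mono h1) (T.cliqueNumOn_union_le _ _)
    have hWge : c1 + 1 ≤ T.cliqueNumOn Wset := by
      have e1 : 2 * ((p1 + 2) * (c1 + 1)) = 2 * (p1 * c1) + 2 * p1 + 4 * c1 + 4 := by ring
      have e2 : (p1 + 1) * c1 = p1 * c1 + c1 := by ring
      omega
    obtain ⟨FX, hFXinj, hFXmem, hFXarc⟩ := T.exists_copy_fun (hsub' Wset hWge)
    have hvX : ∀ a, T.arc v (FX a) := fun a => (hFXmem a).1.1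
    have hXk : ∀ a, FX a ∈ B k := fun a => (hFXmem a).1.2
    have hXY : ∀ a b, T.arc (FX a) (FY b) := by
      intro a b
      have hnot : ¬ T.arc (FY b) (FX a) := by
        intro harc
        exact (hFXmem a).2 (Set.mem_iUnion₂.mpr ⟨b, Finset.mem_univ b, ⟨harc, hXk a⟩⟩)
      have hne : FX a ≠ FY b := by
        intro h
        obtain ⟨j, hkj, hbj⟩ := hYbag b
        exact Set.disjoint_left.mp (hBdisj k j (ne_of_lt hkj)) (hXk a) (h ▸ hbj)
      exact T.arc_of_not_arc' hne hnot
    have hYv : ∀ b, T.arc (FY b) v := fun b => (hYS b).1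
    exact hDfree (T.build_copy FX FY v hFXinj hFYinj hFXarc hFYarc hXY hYv hvX)
  -- Part (b)
  · by_contra hcon
    push_neg at hcon
    set S : Set V := T.outN v ∩ ⋃ k, ⋃ (_ : k < i), B k with hSdef
    have hSne : S.Nonempty := by
      rcases Set.eq_empty_or_nonempty S with h | h
      · rw [h] at hcon
        have := T.cliqueNumOn_empty_le
        omega
      · exact h
    have hKfin : ({k : Fin t | k < i ∧ (S ∩ B k).Nonempty}).Finite := Set.toFinite _
    have hKne : ({k : Fin t | k < i ∧ (S ∩ B k).Nonempty}).Nonempty := by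
      obtain ⟨u, huS⟩ := hSne
      obtain ⟨j, hij, huj⟩ : ∃ j, j < i ∧ u ∈ B j := by simpa using huS.2
      exact ⟨j, hij, u, huS, huj⟩
    obtain ⟨k, ⟨hki, -⟩, hkmax⟩ := Set.exists_max_image _ id hKfin hKne
    set H : Set V := S ∩ ⋃ j, ⋃ (_ : j < k), B j with hHdef
    have hsplit : S ⊆ (S ∩ B k) ∪ H := by
      intro u hu
      obtain ⟨j, hij, huj⟩ : ∃ j, j < i ∧ u ∈ B j := by simpa using hu.2
      rcases eq_or_ne j k with rfl | hne
      · exact Or.inl ⟨hu, huj⟩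
      · have hjk : j < k := lt_of_le_of_ne (hkmax j ⟨hij, u, hu, huj⟩) hne
        exact Or.inr ⟨hu, Set.mem_iUnion₂.mpr ⟨j, hjk, huj⟩⟩
    have hSBk : T.cliqueNumOn (S ∩ B k) < c1 + 1 :=
      lt_of_le_of_lt
        (T.cliqueNumOn_mono (show S ∩ B k ⊆ T.outN v ∩ B k from fun u hu => ⟨hu.1.1, hu.2⟩))
        ((hBchain k i hki).1 v hv)
    have hHge : c1 + 1 ≤ T.cliqueNumOn H := by
      have h1 := T.cliqueNumOn_mono hsplit
      have h2 := T.cliqueNumOn_union_le (S ∩ B k) H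
      omega
    obtain ⟨FY, hFYinj, hFYmem, hFYarc⟩ := T.exists_copy_fun (hsub' H hHge)
    have hYS : ∀ b, FY b ∈ S := fun b => (hFYmem b).1
    have hYbag : ∀ b, ∃ j, j < k ∧ FY b ∈ B j := fun b => by
      have := (hFYmem b).2; simpa using this
    set U : Set V := ⋃ b ∈ (Finset.univ : Finset (DType (m + 1))), (T.inN (FY b) ∩ B k)
      with hUdef
    have hUle : T.cliqueNumOn U ≤ (p1 + 1) * c1 := by
      refine le_trans (T.cliqueNumOn_biUnion_le _ _) ?_
      have hterm : ∀ b ∈ (Finset.univ : Finset (DType (m + 1))),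
          T.cliqueNumOn (T.inN (FY b) ∩ B k) ≤ c1 := by
        intro b _
        obtain ⟨j, hjk, hbj⟩ := hYbag b
        have := (hBchain j k hjk).2 (FY b) hbj
        omega
      refine le_trans (Finset.sum_le_sum hterm) ?_
      rw [Finset.sum_const, Finset.card_univ, card_DType, smul_eq_mul, hp1]
      have h21 : p1 + 2 - 1 = p1 + 1 := rfl
      rw [h21]
    set P : Set V := T.inN v ∩ B k with hPdef
    have hvnotk : v ∉ B k := fun h =>
      Set.disjoint_left.mp (hBdisj i k (ne_of_gt hki)) hv h
    have hPcov : B k ⊆ P ∪ (T.outN v ∩ B k) := by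
      intro u hu
      have hne : u ≠ v := fun h => hvnotk (h ▸ hu)
      rcases T.arc_total' hne with h | h
      · exact Or.inl ⟨h, hu⟩
      · exact Or.inr ⟨h, hu⟩
    have hPge : clarge ≤ T.cliqueNumOn P + T.cliqueNumOn (T.outN v ∩ B k) := by
      have h1 := T.cliqueNumOn_mono hPcov
      have h2 := T.cliqueNumOn_union_le P (T.outN v ∩ B k)
      have h3 := hBclique k
      omega
    have houtNk : T.cliqueNumOn (T.outN v ∩ B k) < c1 + 1 := (hBchain k i hki).1 v hv
    set Wset : Set V := P \ U with hWdef
    have hPW : T.cliqueNumOn P ≤ T.cliqueNumOn Wset + T.cliqueNumOn U := by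
      have h1 : P ⊆ Wset ∪ U := fun u hu => by
        by_cases h : u ∈ U
        · exact Or.inr h
        · exact Or.inl ⟨hu, h⟩
      exact le_trans (T.cliqueNumOn_mono h1) (T.cliqueNumOn_union_le _ _)
    have hWge : c1 + 1 ≤ T.cliqueNumOn Wset := by
      have e1 : 2 * ((p1 + 2) * (c1 + 1)) = 2 * (p1 * c1) + 2 * p1 + 4 * c1 + 4 := by ring
      have e2 : (p1 + 1) * c1 = p1 * c1 + c1 := by ring
      omega
    obtain ⟨FX, hFXinj, hFXmem, hFXarc⟩ := T.exists_copy_fun (hsub' Wset hWge)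
    have hXv : ∀ a, T.arc (FX a) v := fun a => (hFXmem a).1.1
    have hXk : ∀ a, FX a ∈ B k := fun a => (hFXmem a).1.2
    have hYX : ∀ b a, T.arc (FY b) (FX a) := by
      intro b a
      have hnot : ¬ T.arc (FX a) (FY b) := by
        intro harc
        exact (hFXmem a).2 (Set.mem_iUnion₂.mpr ⟨b, Finset.mem_univ b, ⟨harc, hXk a⟩⟩)
      have hne : FY b ≠ FX a := by
        intro h
        obtain ⟨j, hjk, hbj⟩ := hYbag b
        exact Set.disjoint_left.mp (hBdisj k j (ne_of_gt hjk)) (hXk a) (h ▸ hbj)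
      exact T.arc_of_not_arc' hne hnot
    have hvY : ∀ b, T.arc v (FY b) := fun b => (hYS b).1
    exact hDfree (T.build_copy FY FX v hFYinj hFXinj hFYarc hFXarc hYX hXv hvY)
end
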